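/- Let 𝓜 be an (s,η)-quasi-measurement on a finite-dimensional complex Hilbert space A, given by 𝓜(ρ) = (|A|/s)·∑_{i=1}^s |i⟩⟨χ_i| ρ |χ_i⟩⟨i| with unit vectors χ_i satisfying (|A|/s)·∑_{i=1}^s |χ_i⟩⟨χ_i| ≤ η·I_A. Then for every Hermitian matrix ζ on A: ‖𝓜(ζ)‖₁ ≤ η·‖ζ‖₁. -/

import Mathlib

open scoped BigOperators Kronecker Classical ComplexOrder
open Matrix MeasureTheory

noncomputable section

/-- Outer product `|v⟩⟨v|`. -/
def outer {A : Type*} [Fintype A] (v : A → ℂ) : Matrix A A ℂ :=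
  Matrix.of fun i j => v i * star (v j)

/-- Trace norm `‖X‖₁ = Tr √(XᴴX)`. -/
def traceNorm {A : Type*} [Fintype A] [DecidableEq A] (X : Matrix A A ℂ) : ℝ :=
  (((Matrix.posSemidef_conjTranspose_mul_self X).1.eigenvectorUnitary : Matrix A A ℂ) *
    diagonal (((↑) : ℝ → ℂ) ∘ (√·) ∘ (Matrix.posSemidef_conjTranspose_mul_self X).1.eigenvalues) *
    (star (Matrix.posSemidef_conjTranspose_mul_self X).1.eigenvectorUnitary : Matrix A A ℂ)).trace.re

/-- Frobenius norm `‖X‖₂`. -/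
def frobNorm {A : Type*} [Fintype A] (X : Matrix A A ℂ) : ℝ :=
  Real.sqrt ((Xᴴ * X).trace.re)

/-- Operator norm (largest singular value) `‖X‖_∞`. -/
def opNorm {A : Type*} [Fintype A] [DecidableEq A] (X : Matrix A A ℂ) : ℝ :=
  ‖Matrix.toEuclideanCLM (𝕜 := ℂ) X‖

instance matrixMeasurableSpace {m n : Type*} : MeasurableSpace (Matrix m n ℂ) :=
  inferInstanceAs (MeasurableSpace (m → n → ℂ))

/-- A measurement superoperator (given by its POVM elements `Ms`) applied to the second
factor of a bipartite operator, tensored with the identity on the first factor `W`. -/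
def measApply {W A X : Type*} [Fintype A] [DecidableEq X]
    (Ms : X → Matrix A A ℂ) (ρ : Matrix (W × A) (W × A) ℂ) :
    Matrix (W × X) (W × X) ℂ :=
  Matrix.of fun p q =>
    if p.2 = q.2 then ∑ a : A, ∑ a' : A, Ms p.2 a a' * ρ (p.1, a') (q.1, a) else 0

/-- A measurement superoperator applied to an operator (no side register). -/
def measApply0 {A X : Type*} [Fintype A] [DecidableEq X]
    (Ms : X → Matrix A A ℂ) (ρ : Matrix A A ℂ) : Matrix X X ℂ :=
  Matrix.of fun i j => if i = j then ∑ a : A, ∑ a' : A, Ms i a a' * ρ a' a else 0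

/-- The elements `Ms` form a POVM: each is positive semidefinite and they sum to `I`. -/
def IsPOVM {A X : Type*} [Fintype A] [Fintype X] [DecidableEq A]
    (Ms : X → Matrix A A ℂ) : Prop :=
  (∀ i, (Ms i).PosSemidef) ∧ ∑ i, Ms i = 1

/-- The tuple of unit vectors `χ` defines an `(s,η)`-quasi-measurement:
`(|A|/s) ∑ᵢ |χᵢ⟩⟨χᵢ| ≤ η I`. -/
def IsQuasiTuple {A : Type*} [Fintype A] [DecidableEq A] (s : ℕ) (η : ℝ)
    (χ : Fin s → A → ℂ) : Prop :=
  (∀ i, ∑ a, Complex.normSq (χ i a) = 1) ∧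
  ((η : ℂ) • (1 : Matrix A A ℂ) -
    ((Fintype.card A : ℂ) / (s : ℂ)) • ∑ i, outer (χ i)).PosSemidef

/-- The kernel elements `(|A|/s)|χᵢ⟩⟨χᵢ|` of an `(s,η)`-quasi-measurement. -/
def quasiKernel {A : Type*} [Fintype A] (s : ℕ) (χ : Fin s → A → ℂ) :
    Fin s → Matrix A A ℂ :=
  fun i => ((Fintype.card A : ℂ) / (s : ℂ)) • outer (χ i)

open scoped MatrixOrder in
lemma traceNorm_eq_of_sq_eq {A : Type*} [Fintype A] [DecidableEq A] (X S : Matrix A A ℂ)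
    (hS : S.PosSemidef) (hsq : S ^ 2 = Xᴴ * X) : traceNorm X = S.trace.re := by
  have hB := Matrix.posSemidef_conjTranspose_mul_self X
  have h1 : cfc Real.sqrt (Xᴴ * X) = hB.1.cfc Real.sqrt := hB.1.cfc_eq _
  have h2 : CFC.sqrt (Xᴴ * X) = S :=
    CFC.sqrt_unique (by rw [← hsq, pow_two]) hS.nonneg
  have h3 : CFC.sqrt (Xᴴ * X) = cfc Real.sqrt (Xᴴ * X) := by
    rw [CFC.sqrt_eq_real_sqrt _ hB.nonneg, cfcₙ_eq_cfc]
  rw [traceNorm, ← h2, h3, h1, Matrix.IsHermitian.cfc, Unitary.conjStarAlgAut_apply]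
  rfl

lemma traceNorm_diagonal_real {X : Type*} [Fintype X] [DecidableEq X] (r : X → ℝ) :
    traceNorm (Matrix.diagonal (fun i => (r i : ℂ))) = ∑ i, |r i| := by
  set M : Matrix X X ℂ := Matrix.diagonal (fun i => (r i : ℂ)) with hM
  have hB := Matrix.posSemidef_conjTranspose_mul_self M
  have hS : (Matrix.diagonal (fun i => ((|r i| : ℝ) : ℂ))).PosSemidef :=
    Matrix.PosSemidef.diagonal (fun i => Complex.zero_le_real.mpr (abs_nonneg _))
  have hsq : (Matrix.diagonal (fun i => ((|r i| : ℝ) : ℂ))) ^ 2 = Mᴴ * M := by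
    rw [pow_two, Matrix.diagonal_mul_diagonal, hM, Matrix.diagonal_conjTranspose,
      Matrix.diagonal_mul_diagonal]
    congr 1
    funext i
    simp [← Complex.ofReal_mul, abs_mul_abs_self, Complex.star_def, Complex.conj_ofReal]
  have h := traceNorm_eq_of_sq_eq _ _ hS hsq
  rw [h, Matrix.trace_diagonal]
  simp

lemma traceNorm_isHermitian {A : Type*} [Fintype A] [DecidableEq A]
    {ζ : Matrix A A ℂ} (hζ : ζ.IsHermitian) :
    traceNorm ζ = ∑ k, |hζ.eigenvalues k| := by
  set U : Matrix A A ℂ := (hζ.eigenvectorUnitary : Matrix A A ℂ) with hUdef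
  have hU' : star U * U = 1 := Matrix.mem_unitaryGroup_iff'.mp hζ.eigenvectorUnitary.2
  set D : Matrix A A ℂ := Matrix.diagonal (RCLike.ofReal ∘ hζ.eigenvalues) with hDdef
  set D' : Matrix A A ℂ := Matrix.diagonal (fun k => ((|hζ.eigenvalues k| : ℝ) : ℂ)) with hD'def
  have hspec : ζ = U * D * star U := hζ.spectral_theorem
  have hDD : D' * D' = D * D := by
    rw [hDdef, hD'def, Matrix.diagonal_mul_diagonal, Matrix.diagonal_mul_diagonal]
    have hf : (fun k => ((|hζ.eigenvalues k| : ℝ) : ℂ) * ((|hζ.eigenvalues k| : ℝ) : ℂ))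
        = fun k => (RCLike.ofReal ∘ hζ.eigenvalues) k * (RCLike.ofReal ∘ hζ.eigenvalues) k := by
      funext k
      show ((|hζ.eigenvalues k| : ℝ) : ℂ) * ((|hζ.eigenvalues k| : ℝ) : ℂ)
        = ((hζ.eigenvalues k : ℝ) : ℂ) * ((hζ.eigenvalues k : ℝ) : ℂ)
      norm_cast
      exact abs_mul_abs_self _
    rw [hf]
  have hS : (U * D' * star U).PosSemidef := by
    rw [Matrix.star_eq_conjTranspose]
    exact (Matrix.PosSemidef.diagonal
      (fun k => Complex.zero_le_real.mpr (abs_nonneg _))).mul_mul_conjTranspose_same U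
  have hsq : (U * D' * star U) ^ 2 = ζᴴ * ζ := by
    rw [hζ.eq, pow_two, hspec]
    calc U * D' * star U * (U * D' * star U)
        = U * D' * (star U * U) * D' * star U := by noncomm_ring
      _ = U * (D' * D') * star U := by rw [hU']; noncomm_ring
      _ = U * (D * D) * star U := by rw [hDD]
      _ = U * D * (star U * U) * D * star U := by rw [hU']; noncomm_ring
      _ = U * D * star U * (U * D * star U) := by noncomm_ring
  have h := traceNorm_eq_of_sq_eq _ _ hS hsq
  rw [h, Matrix.trace_mul_cycle, hU', one_mul, Matrix.trace_diagonal]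
  simp

lemma quadform_spectral {A : Type*} [Fintype A] [DecidableEq A]
    {ζ : Matrix A A ℂ} (hζ : ζ.IsHermitian) (v : A → ℂ) :
    (∑ a, ∑ a', (v a * star (v a')) * ζ a' a)
      = ∑ k, ((hζ.eigenvalues k : ℝ) : ℂ) * Complex.normSq
          (∑ a, (starRingEnd ℂ) ((hζ.eigenvectorUnitary : Matrix A A ℂ) a k) * v a) := by
  set U : Matrix A A ℂ := (hζ.eigenvectorUnitary : Matrix A A ℂ) with hUdef
  set lam := hζ.eigenvalues with hlam
  set y : A → ℂ := fun k => ∑ a, (starRingEnd ℂ) (U a k) * v a with hy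
  have hentry : ∀ a' a, ζ a' a = ∑ k, U a' k * ((lam k : ℝ) : ℂ) * (starRingEnd ℂ) (U a k) := by
    intro a' a
    conv_lhs => rw [hζ.spectral_theorem, Unitary.conjStarAlgAut_apply]
    simp only [Matrix.mul_apply, Matrix.diagonal_apply, Function.comp_apply, Matrix.star_apply,
      RCLike.star_def, mul_ite, ite_mul, mul_zero, zero_mul, Finset.sum_ite_eq,
      Finset.mem_univ, if_true, Finset.sum_mul, Finset.sum_ite_eq', Finset.sum_ite_eq]
    rfl
  calc (∑ a, ∑ a', (v a * star (v a')) * ζ a' a)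
      = ∑ a, ∑ a', ∑ k, (v a * (starRingEnd ℂ) (v a')) *
          (U a' k * ((lam k : ℝ) : ℂ) * (starRingEnd ℂ) (U a k)) := by
        refine Finset.sum_congr rfl fun a _ => Finset.sum_congr rfl fun a' _ => ?_
        rw [hentry, Finset.mul_sum]
        rfl
    _ = ∑ k, ∑ a, ∑ a', (v a * (starRingEnd ℂ) (v a')) *
          (U a' k * ((lam k : ℝ) : ℂ) * (starRingEnd ℂ) (U a k)) := by
        rw [show (∑ a, ∑ a', ∑ k, (v a * (starRingEnd ℂ) (v a')) *
            (U a' k * ((lam k : ℝ) : ℂ) * (starRingEnd ℂ) (U a k)))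
            = ∑ a, ∑ k, ∑ a', (v a * (starRingEnd ℂ) (v a')) *
            (U a' k * ((lam k : ℝ) : ℂ) * (starRingEnd ℂ) (U a k)) from
          Finset.sum_congr rfl fun a _ => Finset.sum_comm]
        exact Finset.sum_comm
    _ = ∑ k, ((lam k : ℝ) : ℂ) * (y k * (starRingEnd ℂ) (y k)) := by
        refine Finset.sum_congr rfl fun k _ => ?_
        have hcy : (starRingEnd ℂ) (y k) = ∑ a', U a' k * (starRingEnd ℂ) (v a') := by
          simp only [hy, map_sum, _root_.map_mul, Complex.conj_conj]
        rw [hcy]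
        simp only [hy]
        rw [Finset.sum_mul_sum]
        simp only [Finset.mul_sum]
        refine Finset.sum_congr rfl fun a _ => ?_
        refine Finset.sum_congr rfl fun a' _ => ?_
        ring
    _ = ∑ k, ((lam k : ℝ) : ℂ) * Complex.normSq (y k) := by
        refine Finset.sum_congr rfl fun k _ => ?_
        rw [Complex.mul_conj]

/-- An `(s,η)`-quasi-measurement increases the trace norm of a Hermitian operator
by a factor of at most `η`. -/
theorem quasi_measurement_trace_norm_bound
    {A : Type*} [Fintype A] [DecidableEq A]
    (s : ℕ) (hs : 1 ≤ s) (η : ℝ) (hη : 0 < η)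
    (χ : Fin s → A → ℂ) (hχ : IsQuasiTuple s η χ)
    (ζ : Matrix A A ℂ) (hζ : ζ.IsHermitian) :
    traceNorm (measApply0 (quasiKernel s χ) ζ) ≤ η * traceNorm ζ := by
  obtain ⟨hnorm, hpsd⟩ := hχ
  set U : Matrix A A ℂ := (hζ.eigenvectorUnitary : Matrix A A ℂ) with hUdef
  set lam := hζ.eigenvalues with hlam
  set cR : ℝ := (Fintype.card A : ℝ) / (s : ℝ) with hcR
  have hcR0 : 0 ≤ cR := by positivity
  have hcC : ((Fintype.card A : ℂ) / (s : ℂ)) = ((cR : ℝ) : ℂ) := by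
    rw [hcR]; push_cast; ring
  set y : Fin s → A → ℂ := fun i k => ∑ a, (starRingEnd ℂ) (U a k) * χ i a with hy
  set r : Fin s → ℝ := fun i => cR * ∑ k, lam k * Complex.normSq (y i k) with hr
  have hMdiag : measApply0 (quasiKernel s χ) ζ = Matrix.diagonal (fun i => ((r i : ℝ) : ℂ)) := by
    ext i j
    by_cases h : i = j
    · subst h
      rw [Matrix.diagonal_apply_eq]
      show (if i = i then ∑ a, ∑ a', quasiKernel s χ i a a' * ζ a' a else 0) = ((r i : ℝ) : ℂ)
      rw [if_pos rfl]
      have hstep : ∑ a, ∑ a', quasiKernel s χ i a a' * ζ a' a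
          = ((cR : ℝ) : ℂ) * ∑ a, ∑ a', (χ i a * star (χ i a')) * ζ a' a := by
        rw [Finset.mul_sum]
        refine Finset.sum_congr rfl fun a _ => ?_
        rw [Finset.mul_sum]
        refine Finset.sum_congr rfl fun a' _ => ?_
        simp only [quasiKernel, outer, Matrix.smul_apply, Matrix.of_apply, smul_eq_mul, hcC]
        ring
      rw [hstep, quadform_spectral hζ (χ i), hr]
      push_cast
      ring
    · rw [Matrix.diagonal_apply_ne _ h]
      show (if i = j then _ else 0) = 0
      rw [if_neg h]
  have hcol : ∀ k, star (fun a => U a k) ⬝ᵥ (fun a => U a k) = 1 := by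
    intro k
    have h1 : star U * U = 1 := Matrix.mem_unitaryGroup_iff'.mp hζ.eigenvectorUnitary.2
    have h2 : (star U * U) k k = (1 : Matrix A A ℂ) k k := by rw [h1]
    simpa [Matrix.mul_apply, Matrix.star_apply, Matrix.one_apply_eq, dotProduct,
      Pi.star_apply] using h2
  have houter : ∀ k i, star (fun a => U a k) ⬝ᵥ (outer (χ i) *ᵥ (fun a => U a k))
      = (Complex.normSq (y i k) : ℂ) := by
    intro k i
    rw [← Complex.mul_conj]
    have hcy : (starRingEnd ℂ) (y i k) = ∑ b, U b k * (starRingEnd ℂ) (χ i b) := by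
      simp only [hy, map_sum, _root_.map_mul, Complex.conj_conj]
    rw [hcy]
    simp only [hy, dotProduct, Matrix.mulVec, outer, Matrix.of_apply, Pi.star_apply,
      Complex.star_def]
    rw [Finset.sum_mul_sum]
    simp only [Finset.mul_sum]
    refine Finset.sum_congr rfl fun a _ => ?_
    refine Finset.sum_congr rfl fun b _ => ?_
    ring
  have hbound : ∀ k, cR * ∑ i, Complex.normSq (y i k) ≤ η := by
    intro k
    have hp := hpsd.dotProduct_mulVec_nonneg (fun a => U a k)
    have hval : star (fun a => U a k) ⬝ᵥ
        ((((η : ℂ) • (1 : Matrix A A ℂ) -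
          ((Fintype.card A : ℂ) / (s : ℂ)) • ∑ i, outer (χ i))) *ᵥ (fun a => U a k))
        = ((η - cR * ∑ i, Complex.normSq (y i k) : ℝ) : ℂ) := by
      have hsum : ((∑ i, outer (χ i)) *ᵥ (fun a => U a k)) = ∑ i, (outer (χ i) *ᵥ (fun a => U a k)) := by
        funext a
        simp only [Matrix.mulVec, dotProduct, Matrix.sum_apply, Finset.sum_apply, Finset.sum_mul]
        exact Finset.sum_comm
      have hds : (star (fun a => U a k)) ⬝ᵥ (∑ i, (outer (χ i) *ᵥ (fun a => U a k)))
          = ∑ i, (star (fun a => U a k)) ⬝ᵥ (outer (χ i) *ᵥ (fun a => U a k)) := by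
        simp only [dotProduct, Finset.sum_apply, Finset.mul_sum]
        exact Finset.sum_comm
      rw [Matrix.sub_mulVec, Matrix.smul_mulVec, Matrix.smul_mulVec,
        Matrix.one_mulVec, dotProduct_sub, dotProduct_smul, dotProduct_smul, hcol k,
        hsum, hds]
      simp only [houter k, smul_eq_mul, mul_one]
      rw [hcC]
      push_cast
      ring
    rw [hval, Complex.zero_le_real] at hp
    linarith
  rw [hMdiag, traceNorm_diagonal_real, traceNorm_isHermitian hζ]
  calc ∑ i, |r i| ≤ ∑ i, cR * ∑ k, |lam k| * Complex.normSq (y i k) := by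
        refine Finset.sum_le_sum fun i _ => ?_
        rw [hr]
        show |cR * ∑ k, lam k * Complex.normSq (y i k)| ≤ _
        rw [abs_mul, abs_of_nonneg hcR0]
        refine mul_le_mul_of_nonneg_left ?_ hcR0
        refine le_trans (Finset.abs_sum_le_sum_abs _ _) ?_
        refine Finset.sum_le_sum fun k _ => ?_
        rw [abs_mul, abs_of_nonneg (Complex.normSq_nonneg _)]
    _ = ∑ k, |lam k| * (cR * ∑ i, Complex.normSq (y i k)) := by
        simp only [Finset.mul_sum]
        rw [Finset.sum_comm]
        refine Finset.sum_congr rfl fun k _ => Finset.sum_congr rfl fun i _ => ?_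
        ring
    _ ≤ ∑ k, |lam k| * η :=
        Finset.sum_le_sum fun k _ => mul_le_mul_of_nonneg_left (hbound k) (abs_nonneg _)
    _ = η * ∑ k, |lam k| := by rw [← Finset.sum_mul, mul_comm]
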